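/- Let ε₁,…,εₙ be independent real random variables and Rᵢ = ρ_τ(εᵢ − aᵢ) − ρ_τ(εᵢ) − aᵢDᵢ with Dᵢ = (1−τ)1_{εᵢ<0} − τ1_{εᵢ≥0} and aᵢ real constants. Then Var(∑ᵢ Rᵢ) ≤ ∑ᵢ E[Rᵢ²] ≤ ∑ᵢ aᵢ²·P(|εᵢ| < |aᵢ|). -/

import Mathlib

open MeasureTheory ProbabilityTheory Finset

noncomputable def rho (τ u : ℝ) : ℝ := u * (τ - if u < 0 then 1 else 0)

noncomputable def Dfun (τ u : ℝ) : ℝ :=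
  (1 - τ) * (if u < 0 then 1 else 0) - τ * (if 0 ≤ u then 1 else 0)

lemma rho_measurable (τ : ℝ) : Measurable (rho τ) := by
  unfold rho
  exact measurable_id.mul (measurable_const.sub
    (Measurable.ite (measurableSet_lt measurable_id measurable_const)
      measurable_const measurable_const))

lemma Dfun_measurable (τ : ℝ) : Measurable (Dfun τ) := by
  unfold Dfun
  exact (measurable_const.mul
      (Measurable.ite (measurableSet_lt measurable_id measurable_const)
        measurable_const measurable_const)).sub
    (measurable_const.mul
      (Measurable.ite (measurableSet_le measurable_const measurable_id)
        measurable_const measurable_const))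

lemma rho_eq (τ a u : ℝ) :
    rho τ (u - a) - rho τ u - a * Dfun τ u =
      if 0 ≤ u then (if u < a then a - u else 0)
      else (if a ≤ u then u - a else 0) := by
  unfold rho Dfun
  split_ifs <;> first | ring1 | linarith

lemma rho_key (τ a u : ℝ) :
    (rho τ (u - a) - rho τ u - a * Dfun τ u) ^ 2
      ≤ Set.indicator {x : ℝ | |x| < |a|} (fun _ => a ^ 2) u := by
  rw [rho_eq]
  rcases lt_or_ge |u| |a| with h | h
  · rw [Set.indicator_of_mem (show u ∈ {x : ℝ | |x| < |a|} from h)]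
    split_ifs with h1 h2 h3
    · nlinarith
    · nlinarith [sq_nonneg a]
    · have := abs_of_neg (show u < 0 by linarith)
      have := neg_abs_le a
      nlinarith
    · nlinarith [sq_nonneg a]
  · rw [Set.indicator_of_notMem (show u ∉ {x : ℝ | |x| < |a|} by simpa using h)]
    split_ifs with h1 h2 h3
    · rw [abs_of_nonneg h1] at h
      have := le_abs_self a
      nlinarith
    · norm_num
    · rw [abs_of_neg (show u < 0 by linarith)] at h
      have := neg_abs_le a
      have : u = a := le_antisymm (by linarith) h3
      simp [this]
    · norm_num

theorem variance_sum_bound {Ω : Type*} [MeasurableSpace Ω] (μ : Measure Ω)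
    [IsProbabilityMeasure μ] (τ : ℝ) (hτ : τ ∈ Set.Ioo (0:ℝ) 1)
    (n : ℕ) (ε : Fin n → Ω → ℝ) (hε : ∀ i, Measurable (ε i))
    (hind : iIndepFun ε μ)
    (hint : ∀ i, Integrable (ε i) μ) (a : Fin n → ℝ) :
    variance (fun ω => ∑ i, (rho τ (ε i ω - a i) - rho τ (ε i ω) - a i * Dfun τ (ε i ω))) μ
      ≤ ∑ i, ∫ ω, (rho τ (ε i ω - a i) - rho τ (ε i ω) - a i * Dfun τ (ε i ω)) ^ 2 ∂μ ∧
    ∑ i, ∫ ω, (rho τ (ε i ω - a i) - rho τ (ε i ω) - a i * Dfun τ (ε i ω)) ^ 2 ∂μ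
      ≤ ∑ i, a i ^ 2 * (μ {ω | |ε i ω| < |a i|}).toReal := by
  set g : Fin n → ℝ → ℝ := fun i x => rho τ (x - a i) - rho τ x - a i * Dfun τ x with hgdef
  set R : Fin n → Ω → ℝ := fun i ω => rho τ (ε i ω - a i) - rho τ (ε i ω) - a i * Dfun τ (ε i ω)
    with hRdef
  have hg : ∀ i, Measurable (g i) := fun i =>
    (((rho_measurable τ).comp (measurable_id.sub measurable_const)).sub
      (rho_measurable τ)).sub ((Dfun_measurable τ).const_mul _)
  have hRmeas : ∀ i, Measurable (R i) := fun i => (hg i).comp (hε i)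
  -- pointwise bound with the ω-indicator
  have hb : ∀ i ω, R i ω ^ 2 ≤
      Set.indicator {ω' | |ε i ω'| < |a i|} (fun _ => a i ^ 2) ω := by
    intro i ω
    have h := rho_key τ (a i) (ε i ω)
    simpa [Set.indicator_apply] using h
  have hRb : ∀ i ω, R i ω ^ 2 ≤ a i ^ 2 := by
    intro i ω
    refine (hb i ω).trans ?_
    by_cases h : ω ∈ {ω' | |ε i ω'| < |a i|}
    · rw [Set.indicator_of_mem h]
    · rw [Set.indicator_of_notMem h]; positivity
  have hmem : ∀ i, MemLp (R i) 2 μ := by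
    intro i
    refine MemLp.of_bound (hRmeas i).aestronglyMeasurable (|a i|) ?_
    filter_upwards with ω
    rw [Real.norm_eq_abs]
    nlinarith [hRb i ω, sq_abs (R i ω), sq_abs (a i), abs_nonneg (R i ω), abs_nonneg (a i)]
  have hindR : iIndepFun R μ := hind.comp g hg
  have hSmeas : ∀ i, MeasurableSet {ω | |ε i ω| < |a i|} := fun i =>
    measurableSet_lt (hε i).abs measurable_const
  have hint2 : ∀ i, Integrable (fun ω => R i ω ^ 2) μ := by
    intro i
    refine Integrable.mono' (integrable_const (a i ^ 2))
      ((hRmeas i).pow_const 2).aestronglyMeasurable ?_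
    filter_upwards with ω
    rw [Real.norm_eq_abs, abs_of_nonneg (sq_nonneg _)]
    exact hRb i ω
  constructor
  · have hsum : (fun ω => ∑ i, R i ω) = ∑ i, R i := by
      funext ω; simp [Finset.sum_apply]
    rw [hsum, IndepFun.variance_sum (fun i _ => hmem i)
      (fun i _ j _ hij => hindR.indepFun hij)]
    refine Finset.sum_le_sum fun i _ => ?_
    exact variance_le_expectation_sq (hRmeas i).aestronglyMeasurable
  · refine Finset.sum_le_sum fun i _ => ?_
    have h1 : ∫ ω, R i ω ^ 2 ∂μ ≤
        ∫ ω, Set.indicator {ω' | |ε i ω'| < |a i|} (fun _ => a i ^ 2) ω ∂μ :=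
      integral_mono (hint2 i) ((integrable_const _).indicator (hSmeas i)) (hb i)
    rw [integral_indicator_const _ (hSmeas i), smul_eq_mul, mul_comm] at h1
    exact h1
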